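/- Let H and H_r be real symmetric n×n matrices and let k be an orthogonal n×n matrix. Then the following are equivalent: (a) for every antisymmetric real n×n matrix Z, the derivative at s = 0 of the function s ↦ trace( (k·exp(s Z))·H_r·(k·exp(s Z))ᵀ·H ) is zero; (b) the matrix k·H_r·kᵀ commutes with H. -/

import Mathlib

open Filter Topology NormedSpace Matrix

section aux
variable {n : ℕ}

attribute [local instance] Matrix.linftyOpNormedRing Matrix.linftyOpNormedAlgebra

lemma aux_hasDerivAt (H Hr k Z : Matrix (Fin n) (Fin n) ℝ) :
    HasDerivAt (fun s : ℝ =>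
        ((k * exp (s • Z)) * Hr * (k * exp (s • Z)).transpose * H).trace)
      ((k * Z * Hr * k.transpose + k * Hr * (Z.transpose * k.transpose)) * H).trace 0 := by
  have h1 : HasDerivAt (fun s : ℝ => exp (s • Z)) Z 0 := by
    have := hasDerivAt_exp_smul_const (𝕂 := ℝ) Z (0 : ℝ)
    simp at this ⊢; exact this
  have h1t : HasDerivAt (fun s : ℝ => (k * exp (s • Z)).transpose)
      (Z.transpose * k.transpose) 0 := by
    have heq : (fun s : ℝ => (k * exp (s • Z)).transpose)
        = fun s : ℝ => exp (s • Z.transpose) * k.transpose := by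
      funext s
      rw [Matrix.transpose_mul, ← Matrix.exp_transpose, Matrix.transpose_smul]
    rw [heq]
    have := (hasDerivAt_exp_smul_const (𝕂 := ℝ) Z.transpose (0 : ℝ)).mul_const k.transpose
    simp at this ⊢; exact this
  have h2 : HasDerivAt (fun s : ℝ => k * exp (s • Z)) (k * Z) 0 := by
    have := h1.const_mul k
    exact this
  have h3 : HasDerivAt (fun s : ℝ => k * exp (s • Z) * Hr) (k * Z * Hr) 0 :=
    h2.mul_const Hr
  have h4 : HasDerivAt
      (fun s : ℝ => k * exp (s • Z) * Hr * (k * exp (s • Z)).transpose)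
      (k * Z * Hr * k.transpose + k * Hr * (Z.transpose * k.transpose)) 0 := by
    have := h3.mul h1t
    simp [exp_zero] at this ⊢; exact this
  have h5 := h4.mul_const H
  have := ((Matrix.traceLinearMap (Fin n) ℝ ℝ).toContinuousLinearMap).hasFDerivAt.comp_hasDerivAt
    (0 : ℝ) h5
  simp at this ⊢; exact this

end aux

lemma aux_B_eq_zero {n : ℕ} (B : Matrix (Fin n) (Fin n) ℝ)
    (h : (B.transpose * B).trace = 0) : B = 0 := by
  have h' : ∑ j, ∑ i, B i j * B i j = 0 := by
    rw [← h]
    simp [Matrix.trace, Matrix.mul_apply, Matrix.diag, Matrix.transpose_apply]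
  have hnn : ∀ j ∈ Finset.univ, (0:ℝ) ≤ ∑ i, B i j * B i j := fun j _ =>
    Finset.sum_nonneg fun i _ => mul_self_nonneg _
  ext i j
  have hcol := (Finset.sum_eq_zero_iff_of_nonneg hnn).mp h' j (Finset.mem_univ j)
  have := (Finset.sum_eq_zero_iff_of_nonneg fun i _ => mul_self_nonneg (B i j)).mp hcol i
    (Finset.mem_univ i)
  simpa [mul_self_eq_zero] using this

/-- Criticality of the height function: for `H`, `H_r` symmetric and `k` orthogonal, the
derivative at `s = 0` of `s ↦ trace((k·exp(sZ))·H_r·(k·exp(sZ))ᵀ·H)` vanishes for every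
antisymmetric `Z` iff `k·H_r·kᵀ` commutes with `H`. -/
theorem height_function_critical_iff_commutes
    {n : ℕ} (H Hr k : Matrix (Fin n) (Fin n) ℝ)
    (hH : H.transpose = H) (hHr : Hr.transpose = Hr)
    (hk : k * k.transpose = 1) :
    (∀ Z : Matrix (Fin n) (Fin n) ℝ, Z.transpose = -Z →
      deriv (fun s : ℝ =>
        ((k * exp (s • Z)) * Hr * (k * exp (s • Z)).transpose * H).trace) 0 = 0)
    ↔ (k * Hr * k.transpose) * H = H * (k * Hr * k.transpose) := by
  have hk' : k.transpose * k = 1 := mul_eq_one_comm.mp hk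
  set C : Matrix (Fin n) (Fin n) ℝ := k.transpose * H * k with hC
  have hCsymm : C.transpose = C := by
    rw [hC]
    simp [Matrix.transpose_mul, Matrix.mul_assoc, hH]
  set B : Matrix (Fin n) (Fin n) ℝ := Hr * C - C * Hr with hB
  have hBanti : B.transpose = -B := by
    rw [hB]
    simp [Matrix.transpose_sub, Matrix.transpose_mul, hCsymm, hHr]
  -- rewrite derivative value
  have hderiv : ∀ Z : Matrix (Fin n) (Fin n) ℝ, Z.transpose = -Z →
      deriv (fun s : ℝ =>
        ((k * exp (s • Z)) * Hr * (k * exp (s • Z)).transpose * H).trace) 0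
      = (Z * B).trace := by
    intro Z hZ
    rw [(aux_hasDerivAt H Hr k Z).deriv, hZ]
    rw [Matrix.add_mul, Matrix.trace_add]
    have e1 : (k * Z * Hr * k.transpose * H).trace = (Z * (Hr * C)).trace := by
      rw [show k * Z * Hr * k.transpose * H = k * (Z * (Hr * (k.transpose * H))) by
        simp [Matrix.mul_assoc], Matrix.trace_mul_comm]
      simp [hC, Matrix.mul_assoc]
    have e2 : (k * Hr * (-Z * k.transpose) * H).trace = -(Z * (C * Hr)).trace := by
      rw [show k * Hr * (-Z * k.transpose) * H = -(k * (Hr * (Z * (k.transpose * H)))) by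
        simp [Matrix.mul_assoc], Matrix.trace_neg, Matrix.trace_mul_comm]
      rw [show Hr * (Z * (k.transpose * H)) * k = Hr * (Z * (C)) by
        simp [hC, Matrix.mul_assoc], Matrix.trace_mul_comm]
      simp [Matrix.mul_assoc]
    rw [e1, e2, hB]
    rw [Matrix.mul_sub, Matrix.trace_sub]
    ring
  constructor
  · intro hcrit
    have h0 := hderiv B hBanti
    rw [hcrit B hBanti] at h0
    have hB0 : B = 0 := by
      apply aux_B_eq_zero
      rw [hBanti, Matrix.neg_mul, Matrix.trace_neg, ← h0]
      ring
    have hcomm : Hr * C = C * Hr := by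
      have := sub_eq_zero.mp (hB ▸ hB0)
      exact this
    -- conjugate back
    have := congrArg (fun M => k * M * k.transpose) hcomm
    simp only [hC, Matrix.mul_assoc] at this ⊢
    calc k * (Hr * (k.transpose * H)) = k * (Hr * (k.transpose * (H * (k * k.transpose)))) := by
          rw [hk]; simp [Matrix.mul_assoc]
      _ = k * (k.transpose * (H * (k * (Hr * k.transpose)))) := by
          simpa [Matrix.mul_assoc] using this
      _ = H * (k * (Hr * k.transpose)) := by
          rw [← Matrix.mul_assoc, ← Matrix.mul_assoc, hk]; simp [Matrix.mul_assoc]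
  · intro hcomm Z hZ
    rw [hderiv Z hZ]
    have hB0 : B = 0 := by
      rw [hB, sub_eq_zero, hC]
      have := congrArg (fun M => k.transpose * M * k) hcomm
      simp only [Matrix.mul_assoc] at this
      simp only [Matrix.mul_assoc]
      calc Hr * (k.transpose * (H * k)) = k.transpose * (k * (Hr * (k.transpose * (H * k)))) := by
            conv_lhs => rw [← Matrix.one_mul (Hr * (k.transpose * (H * k))), ← hk',
              Matrix.mul_assoc]
        _ = k.transpose * (H * (k * (Hr * (k.transpose * k)))) := by
            simpa [Matrix.mul_assoc] using this
        _ = k.transpose * (H * (k * Hr)) := by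
            rw [hk']; simp [Matrix.mul_assoc]
    rw [hB0]
    simp
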